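/- Let N be a (deterministically described) counting measure model where the expected intensity satisfies the renewal equation ℓ(t) = μ + ∫_0^t φ(t−u) ℓ(u) du, with μ ≥ 0 constant and φ : ℝ₊ → ℝ₊ continuous with ‖φ‖_{L¹} < 1. Then there exists a unique continuous bounded solution ℓ on [0, ∞), it satisfies ℓ(t) ≥ μ for all t, and ℓ(t) → μ/(1 − ‖φ‖_{L¹}) as t → ∞. -/

import Mathlib

open Filter MeasureTheory Set intervalIntegral BoundedContinuousFunction Topology

lemma conv_bound (φ g : ℝ → ℝ) (hφc : Continuous φ) (hφnn : ∀ t, 0 ≤ φ t)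
    (hgc : Continuous g) (t p q B : ℝ) (hpq : p ≤ q)
    (hB : ∀ u ∈ Icc p q, |g u| ≤ B) :
    |∫ u in p..q, φ (t - u) * g u| ≤ B * ∫ v in (t - q)..(t - p), φ v := by
  have hk : Continuous fun u => φ (t - u) := hφc.comp (continuous_const.sub continuous_id)
  have hi1 : IntervalIntegrable (fun u => |φ (t - u) * g u|) volume p q :=
    ((hk.mul hgc).abs).intervalIntegrable p q
  have hi2 : IntervalIntegrable (fun u => B * φ (t - u)) volume p q :=
    (continuous_const.mul hk).intervalIntegrable p q
  calc |∫ u in p..q, φ (t - u) * g u|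
      ≤ ∫ u in p..q, |φ (t - u) * g u| :=
        intervalIntegral.abs_integral_le_integral_abs hpq
    _ ≤ ∫ u in p..q, B * φ (t - u) := by
        refine intervalIntegral.integral_mono_on hpq hi1 hi2 fun u hu => ?_
        rw [abs_mul, abs_of_nonneg (hφnn _), mul_comm]
        exact mul_le_mul_of_nonneg_right (hB u hu) (hφnn _)
    _ = B * ∫ u in p..q, φ (t - u) := intervalIntegral.integral_const_mul _ _
    _ = B * ∫ v in (t - q)..(t - p), φ v := by
        rw [intervalIntegral.integral_comp_sub_left]

/-- The one-dimensional Hawkes renewal equation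
`ℓ(t) = μ + ∫_0^t φ(t-u) ℓ(u) du` with constant `μ ≥ 0` and continuous nonnegative
`φ` with `‖φ‖_{L¹} < 1` has a unique continuous bounded solution on `[0,∞)`; it
satisfies `ℓ ≥ μ` and `ℓ(t) → μ/(1 - ‖φ‖_{L¹})` as `t → ∞`. -/
theorem stmt17 (μ : ℝ) (hμ : 0 ≤ μ)
    (φ : ℝ → ℝ) (hφc : Continuous φ) (hφnn : ∀ t, 0 ≤ φ t)
    (hφint : IntegrableOn φ (Ici 0))
    (hφL1 : (∫ t in Ioi (0:ℝ), φ t) < 1) :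
    ∃ ℓ : ℝ → ℝ,
      (ContinuousOn ℓ (Ici 0) ∧ (∃ C, ∀ t ≥ (0:ℝ), |ℓ t| ≤ C) ∧
        (∀ t ≥ (0:ℝ), ℓ t = μ + ∫ u in (0:ℝ)..t, φ (t - u) * ℓ u)) ∧
      (∀ t ≥ (0:ℝ), μ ≤ ℓ t) ∧
      Tendsto ℓ atTop (nhds (μ / (1 - ∫ t in Ioi (0:ℝ), φ t))) ∧
      (∀ ℓ' : ℝ → ℝ,
        (ContinuousOn ℓ' (Ici 0) ∧ (∃ C, ∀ t ≥ (0:ℝ), |ℓ' t| ≤ C) ∧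
          (∀ t ≥ (0:ℝ), ℓ' t = μ + ∫ u in (0:ℝ)..t, φ (t - u) * ℓ' u)) →
        ∀ t ≥ (0:ℝ), ℓ' t = ℓ t) := by
  set a := ∫ t in Ioi (0:ℝ), φ t with ha_def
  have ha0 : 0 ≤ a := setIntegral_nonneg measurableSet_Ioi fun x _ => hφnn x
  have hc_nn : ∀ r : ℝ, 0 ≤ r → 0 ≤ ∫ v in (0:ℝ)..r, φ v := fun r hr =>
    intervalIntegral.integral_nonneg hr fun u _ => hφnn u
  have hφint' : IntegrableOn φ (Ioi 0) := hφint.mono_set Ioi_subset_Ici_self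
  have hc_le : ∀ r : ℝ, (∫ v in (0:ℝ)..r, φ v) ≤ a := by
    intro r
    rcases le_or_gt r 0 with h | h
    · have h2 : (∫ v in (0:ℝ)..r, φ v) ≤ 0 := by
        rw [intervalIntegral.integral_of_ge h]
        exact neg_nonpos.mpr (setIntegral_nonneg measurableSet_Ioc fun x _ => hφnn x)
      exact h2.trans ha0
    · rw [intervalIntegral.integral_of_le h.le, ha_def]
      exact setIntegral_mono_set hφint' (Eventually.of_forall fun x => hφnn x)
        Ioc_subset_Ioi_self.eventuallyLE
  have Tcont : ∀ f : BoundedContinuousFunction ℝ ℝ,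
      Continuous fun t : ℝ => μ + ∫ u in (0:ℝ)..(max t 0), φ (max t 0 - u) * f u := by
    intro f
    apply continuous_const.add
    have h1 : Continuous fun s : ℝ => ∫ u in (0:ℝ)..s, φ (s - u) * f u := by
      apply intervalIntegral.continuous_parametric_intervalIntegral_of_continuous
        (f := fun s u => φ (s - u) * f u) (μ := volume) ?_ continuous_id
      exact (hφc.comp (continuous_fst.sub continuous_snd)).mul
        (f.continuous.comp continuous_snd)
    exact h1.comp (continuous_id.max continuous_const)
  -- bound
  have Tbdd : ∀ (f : BoundedContinuousFunction ℝ ℝ) (t : ℝ),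
      ‖μ + ∫ u in (0:ℝ)..(max t 0), φ (max t 0 - u) * f u‖ ≤ |μ| + ‖f‖ * a := by
    intro f t
    rw [Real.norm_eq_abs]
    refine (abs_add_le _ _).trans (add_le_add_right ?_ _)
    have h := conv_bound φ f hφc hφnn f.continuous (max t 0) 0 (max t 0) ‖f‖
      (le_max_right t 0) (fun u _ => f.norm_coe_le_norm u)
    rw [sub_self, sub_zero] at h
    exact h.trans (mul_le_mul_of_nonneg_left (hc_le _) (norm_nonneg f))
  obtain ⟨T, hTapp⟩ : ∃ T : BoundedContinuousFunction ℝ ℝ → BoundedContinuousFunction ℝ ℝ,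
      ∀ (f : BoundedContinuousFunction ℝ ℝ) (t : ℝ),
        T f t = μ + ∫ u in (0:ℝ)..(max t 0), φ (max t 0 - u) * f u :=
    ⟨fun f => BoundedContinuousFunction.ofNormedAddCommGroup _ (Tcont f) _ (Tbdd f),
      fun f t => rfl⟩
  -- contraction
  have Tdist : ∀ f g : BoundedContinuousFunction ℝ ℝ, ∀ t : ℝ,
      dist (T f t) (T g t) ≤ a * dist f g := by
    intro f g t
    have hi : ∀ h : ℝ →ᵇ ℝ,
        IntervalIntegrable (fun u => φ (max t 0 - u) * h u) volume 0 (max t 0) := by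
      intro h
      exact Continuous.intervalIntegrable
        ((hφc.comp (continuous_const.sub continuous_id)).mul h.continuous) _ _
    rw [hTapp, hTapp, Real.dist_eq, add_sub_add_left_eq_sub,
      ← intervalIntegral.integral_sub (hi f) (hi g)]
    simp only [← mul_sub]
    have h := conv_bound φ (fun u => f u - g u) hφc hφnn (f.continuous.sub g.continuous)
      (max t 0) 0 (max t 0) (dist f g) (le_max_right t 0)
      (fun u _ => by rw [← Real.dist_eq]; exact f.dist_coe_le_dist u)
    rw [sub_self, sub_zero] at h
    rw [mul_comm]
    exact h.trans (mul_le_mul_of_nonneg_left (hc_le _) dist_nonneg)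
  have hT : ContractingWith ⟨a, ha0⟩ T := by
    refine ⟨?_, LipschitzWith.of_dist_le_mul fun f g => ?_⟩
    · exact_mod_cast hφL1
    · rw [BoundedContinuousFunction.dist_le (by positivity)]
      exact Tdist f g
  set ℓf := ContractingWith.fixedPoint T hT with hℓf_def
  have hfix : T ℓf = ℓf := hT.fixedPoint_isFixedPt
  have heq : ∀ t : ℝ, 0 ≤ t → ℓf t = μ + ∫ u in (0:ℝ)..t, φ (t - u) * ℓf u := by
    intro t ht
    conv_lhs => rw [← hfix]
    rw [hTapp, max_eq_left ht]
  -- nonnegativity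
  have hS : IsClosed {f : ℝ →ᵇ ℝ | ∀ t, 0 ≤ f t} := by
    have h : {f : ℝ →ᵇ ℝ | ∀ t, 0 ≤ f t} = ⋂ t, {f : ℝ →ᵇ ℝ | 0 ≤ f t} := by
      ext f; simp [Set.mem_iInter]
    rw [h]
    exact isClosed_iInter fun t => isClosed_le continuous_const
      (continuous_eval_const t)
  have hTS : ∀ f : ℝ →ᵇ ℝ, (∀ u, 0 ≤ f u) → ∀ t, 0 ≤ T f t := by
    intro f hf t
    rw [hTapp]
    have h : 0 ≤ ∫ u in (0:ℝ)..(max t 0), φ (max t 0 - u) * f u :=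
      intervalIntegral.integral_nonneg (le_max_right t 0)
        fun u _ => mul_nonneg (hφnn _) (hf u)
    linarith
  have hℓnn : ∀ u : ℝ, 0 ≤ ℓf u := by
    have hiter : ∀ n : ℕ, ∀ u : ℝ, 0 ≤ (T^[n] 0) u := by
      intro n
      induction n with
      | zero => intro u; simp
      | succ n ih =>
        intro u
        rw [Function.iterate_succ_apply']
        exact hTS _ ih u
    exact hS.mem_of_tendsto (hT.tendsto_iterate_fixedPoint 0)
      (Eventually.of_forall fun n => hiter n)
  have hge : ∀ t : ℝ, 0 ≤ t → μ ≤ ℓf t := by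
    intro t ht
    rw [heq t ht]
    have h : 0 ≤ ∫ u in (0:ℝ)..t, φ (t - u) * ℓf u :=
      intervalIntegral.integral_nonneg ht fun u _ => mul_nonneg (hφnn _) (hℓnn u)
    linarith
  -- uniqueness
  have huniq : ∀ ℓ' : ℝ → ℝ,
      (ContinuousOn ℓ' (Ici 0) ∧ (∃ C, ∀ t ≥ (0:ℝ), |ℓ' t| ≤ C) ∧
        (∀ t ≥ (0:ℝ), ℓ' t = μ + ∫ u in (0:ℝ)..t, φ (t - u) * ℓ' u)) →
      ∀ t ≥ (0:ℝ), ℓ' t = ℓf t := by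
    rintro ℓ' ⟨hc, ⟨C, hC⟩, he⟩ t ht
    have hcont : Continuous fun x : ℝ => ℓ' (max x 0) :=
      hc.comp_continuous (continuous_id.max continuous_const) fun x => le_max_right x 0
    set f' : ℝ →ᵇ ℝ := BoundedContinuousFunction.ofNormedAddCommGroup _ hcont C
      (fun x => by rw [Real.norm_eq_abs]; exact hC _ (le_max_right x 0)) with hf'
    have happ : ∀ x, f' x = ℓ' (max x 0) := fun x => rfl
    have hfixed : Function.IsFixedPt T f' := by
      ext x
      rw [hTapp, happ]
      have h0x : (0:ℝ) ≤ max x 0 := le_max_right x 0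
      rw [he (max x 0) h0x]
      congr 1
      apply intervalIntegral.integral_congr
      intro u hu
      rw [uIcc_of_le h0x] at hu
      show φ (max x 0 - u) * f' u = φ (max x 0 - u) * ℓ' u
      rw [happ, max_eq_left hu.1]
    have hfe : f' = ℓf := hT.fixedPoint_unique hfixed
    calc ℓ' t = f' t := by rw [happ, max_eq_left ht]
    _ = ℓf t := by rw [hfe]
  -- limit
  have h1a : 0 < 1 - a := by linarith
  set lam := μ / (1 - a) with hlam_def
  have hmul : μ = lam * (1 - a) := (div_mul_cancel₀ μ h1a.ne').symm
  set ρ : ℝ → ℝ := fun r => a - ∫ v in (0:ℝ)..r, φ v with hρ_def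
  have hρnn : ∀ r, 0 ≤ ρ r := fun r => by simp only [hρ_def]; linarith [hc_le r]
  have hρ0 : Tendsto ρ atTop (𝓝 0) := by
    have h := MeasureTheory.intervalIntegral_tendsto_integral_Ioi 0
      (hφint.mono_set Ioi_subset_Ici_self) (tendsto_id (α := ℝ))
    rw [← ha_def] at h
    have h2 := (tendsto_const_nhds (α := ℝ) (x := a) (f := atTop)).sub h
    rw [sub_self] at h2
    exact h2
  have hρsub : ∀ s t : ℝ, (∫ v in s..t, φ v) = ρ s - ρ t := by
    intro s t
    simp only [hρ_def]
    rw [← intervalIntegral.integral_interval_sub_left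
      (hφc.intervalIntegrable 0 t) (hφc.intervalIntegrable 0 s)]
    ring
  have geq : ∀ t : ℝ, 0 ≤ t →
      ℓf t - lam = (∫ u in (0:ℝ)..t, φ (t - u) * (ℓf u - lam)) - lam * ρ t := by
    intro t ht
    have hig : IntervalIntegrable (fun u => φ (t - u) * (ℓf u - lam)) volume 0 t := by
      exact Continuous.intervalIntegrable
        ((hφc.comp (continuous_const.sub continuous_id)).mul
          (ℓf.continuous.sub continuous_const)) _ _
    have hilφ : IntervalIntegrable (fun u => lam * φ (t - u)) volume 0 t := by
      exact Continuous.intervalIntegrable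
        (continuous_const.mul (hφc.comp (continuous_const.sub continuous_id))) _ _
    have h1 : (∫ u in (0:ℝ)..t, φ (t - u) * ℓf u)
        = (∫ u in (0:ℝ)..t, φ (t - u) * (ℓf u - lam)) + lam * ∫ v in (0:ℝ)..t, φ v := by
      have e : (fun u => φ (t - u) * ℓf u)
          = fun u => φ (t - u) * (ℓf u - lam) + lam * φ (t - u) := funext fun u => by ring
      rw [e, intervalIntegral.integral_add hig hilφ, intervalIntegral.integral_const_mul]
      congr 1
      rw [intervalIntegral.integral_comp_sub_left, sub_self, sub_zero]
    have h2 := heq t ht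
    rw [h1] at h2
    simp only [hρ_def]
    rw [mul_sub] at hmul ⊢
    rw [mul_one] at hmul
    linarith
  set A := ‖ℓf‖ + |lam| with hA_def
  have hA : ∀ u : ℝ, |ℓf u - lam| ≤ A := fun u =>
    (abs_sub _ _).trans (add_le_add (ℓf.norm_coe_le_norm u) le_rfl)
  have hA0 : 0 ≤ A := (abs_nonneg _).trans (hA 0)
  -- the key contraction-of-eventual-bounds step
  have key : ∀ B : ℝ, 0 ≤ B → (∀ᶠ t in atTop, |ℓf t - lam| ≤ B) → ∀ ε : ℝ, 0 < ε →
      ∀ᶠ t in atTop, |ℓf t - lam| ≤ a * B + ε := by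
    intro B hB hevB ε hε
    obtain ⟨T₀, hT₀⟩ := eventually_atTop.1 hevB
    set T₁ := max T₀ 0 with hT₁_def
    have hT₁nn : (0:ℝ) ≤ T₁ := le_max_right _ _
    have hT₁B : ∀ u, T₁ ≤ u → |ℓf u - lam| ≤ B := fun u hu =>
      hT₀ u ((le_max_left _ _).trans hu)
    have hev1 : ∀ᶠ t in atTop, A * ρ (t - T₁) ≤ ε / 2 := by
      have h := (hρ0.comp (tendsto_atTop_add_const_right atTop (-T₁)
        (tendsto_id (α := ℝ)))).const_mul A
      rw [mul_zero] at h
      simp only [Function.comp, sub_eq_add_neg]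
      exact (h.eventually_le_const (by linarith)).mono fun t ht => ht
    have hev2 : ∀ᶠ t in atTop, |lam| * ρ t ≤ ε / 2 := by
      have h := hρ0.const_mul |lam|
      rw [mul_zero] at h
      exact (h.eventually_le_const (by linarith)).mono fun t ht => ht
    filter_upwards [hev1, hev2, eventually_ge_atTop T₁] with t h1 h2 htT
    have ht0 : (0:ℝ) ≤ t := hT₁nn.trans htT
    have hi1 : IntervalIntegrable (fun u => φ (t - u) * (ℓf u - lam)) volume 0 T₁ := by
      exact Continuous.intervalIntegrable
        ((hφc.comp (continuous_const.sub continuous_id)).mul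
          (ℓf.continuous.sub continuous_const)) _ _
    have hi2 : IntervalIntegrable (fun u => φ (t - u) * (ℓf u - lam)) volume T₁ t := by
      exact Continuous.intervalIntegrable
        ((hφc.comp (continuous_const.sub continuous_id)).mul
          (ℓf.continuous.sub continuous_const)) _ _
    have hsplit : (∫ u in (0:ℝ)..t, φ (t - u) * (ℓf u - lam))
        = (∫ u in (0:ℝ)..T₁, φ (t - u) * (ℓf u - lam))
          + ∫ u in T₁..t, φ (t - u) * (ℓf u - lam) :=
      (intervalIntegral.integral_add_adjacent_intervals hi1 hi2).symm
    have hI1 : |∫ u in (0:ℝ)..T₁, φ (t - u) * (ℓf u - lam)| ≤ ε / 2 := by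
      have h := conv_bound φ (fun u => ℓf u - lam) hφc hφnn
        (ℓf.continuous.sub continuous_const) t 0 T₁ A hT₁nn (fun u _ => hA u)
      rw [sub_zero, hρsub (t - T₁) t] at h
      beta_reduce at h
      refine h.trans ?_
      have h4 : 0 ≤ A * ρ t := mul_nonneg hA0 (hρnn t)
      rw [mul_sub]
      exact le_trans (sub_le_self _ h4) h1
    have hI2 : |∫ u in T₁..t, φ (t - u) * (ℓf u - lam)| ≤ a * B := by
      have h := conv_bound φ (fun u => ℓf u - lam) hφc hφnn
        (ℓf.continuous.sub continuous_const) t T₁ t B htT (fun u hu => hT₁B u hu.1)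
      rw [sub_self] at h
      beta_reduce at h
      refine h.trans ?_
      rw [mul_comm a B]
      exact mul_le_mul_of_nonneg_left (hc_le _) hB
    rw [geq t ht0, hsplit]
    have h3 : |lam * ρ t| ≤ ε / 2 := by
      rw [abs_mul, abs_of_nonneg (hρnn t)]
      exact h2
    have habs := abs_sub ((∫ u in (0:ℝ)..T₁, φ (t - u) * (ℓf u - lam))
      + ∫ u in T₁..t, φ (t - u) * (ℓf u - lam)) (lam * ρ t)
    have habs2 := abs_add_le (∫ u in (0:ℝ)..T₁, φ (t - u) * (ℓf u - lam))
      (∫ u in T₁..t, φ (t - u) * (ℓf u - lam))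
    linarith
  -- iterate the key step
  have hpow : ∀ ε : ℝ, 0 < ε → ∀ n : ℕ, ∀ᶠ t in atTop, |ℓf t - lam| ≤ a ^ n * A + ε := by
    intro ε hε n
    induction n with
    | zero =>
      filter_upwards with t
      have := hA t
      simp only [pow_zero, one_mul]
      linarith
    | succ n ih =>
      have h := key (a ^ n * A + ε) (by positivity) ih ((1 - a) * ε)
        (by positivity)
      refine h.mono fun t ht => ?_
      have he : a * (a ^ n * A + ε) + (1 - a) * ε = a ^ (n + 1) * A + ε := by ring
      linarith
  have hlim : Tendsto (⇑ℓf) atTop (𝓝 lam) := by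
    rw [Metric.tendsto_atTop]
    intro ε hε
    have h3 : Tendsto (fun n : ℕ => a ^ n * A) atTop (𝓝 0) := by
      have := (tendsto_pow_atTop_nhds_zero_of_lt_one ha0 hφL1).mul_const A
      rwa [zero_mul] at this
    obtain ⟨n, hn⟩ := (h3.eventually_lt_const (by linarith : (0:ℝ) < ε / 3)).exists
    obtain ⟨N, hN⟩ := eventually_atTop.1 (hpow (ε / 3) (by linarith) n)
    refine ⟨N, fun t hts => ?_⟩
    rw [Real.dist_eq]
    have := hN t hts
    calc |ℓf t - lam| ≤ a ^ n * A + ε / 3 := hN t hts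
    _ < ε := by linarith
  refine ⟨⇑ℓf, ⟨ℓf.continuous.continuousOn, ⟨‖ℓf‖, fun t _ => ?_⟩,
    fun t ht => heq t ht⟩, fun t ht => hge t ht, hlim, huniq⟩
  rw [← Real.norm_eq_abs]
  exact ℓf.norm_coe_le_norm t
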